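/- Let m ≥ 2 and let t be an even integer with 0 < t ≤ 2^m. Let W be the set of all strings w ∈ {0,1}^{8m} whose Hamming distance from 1^{8m} lies between 4m−3 and 4m+3 inclusive. Let X = {(bin_m(i) bin_m(i)ᶜ)⁴ : 0 ≤ i < t}, let X^{⊕01} be the set obtained from X by flipping the last bit of each string, and X^{⊕10} the set obtained by flipping the second-to-last bit of each string. Then there exists a fixed-point-free involution σ of the set S = W \ (X ∪ X^{⊕01} ∪ X^{⊕10}) such that for every s ∈ S the Hamming distance between s and σ(s) is at least 2; that is, S admits a perfect matching in which no matched pair is adjacent in the hypercube Q_{8m}. -/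

import Mathlib

/-- The length-`8m` bit-string `(z z̄)⁴`: even-indexed blocks carry `z` and
odd-indexed blocks carry the bitwise complement of `z`. Here `z : ℕ → Bool`
describes a length-`m` bit-string via its first `m` values. -/
def xStr (m : ℕ) (z : ℕ → Bool) : Fin (8 * m) → Bool := fun p =>
  if ((p : ℕ) / m) % 2 = 0 then z ((p : ℕ) % m) else !(z ((p : ℕ) % m))

/-- `bin i` is the bit-string of the natural number `i` (position `o` is bit `o`). -/
def bin (i : ℕ) : ℕ → Bool := fun o => i.testBit o

/-- Flip the bit at (absolute) position `q` of a length-`N` bit-string. -/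
def flipAt (N : ℕ) (q : ℕ) (v : Fin N → Bool) : Fin N → Bool := fun i =>
  if (i : ℕ) = q then !(v i) else v i

/-- The all-ones string `1^{8m}`. -/
def rt (m : ℕ) : Fin (8 * m) → Bool := fun _ => true

/-- `W`: all strings at Hamming distance between `4m−3` and `4m+3` from `1^{8m}`. -/
def Wset (m : ℕ) : Set (Fin (8 * m) → Bool) :=
  {w | 4 * m - 3 ≤ hammingDist (rt m) w ∧ hammingDist (rt m) w ≤ 4 * m + 3}

/-- `X = {(bin_m(i) bin_m(i)ᶜ)⁴ : 0 ≤ i < t}`. -/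
def Xset (m t : ℕ) : Set (Fin (8 * m) → Bool) := {v | ∃ i < t, v = xStr m (bin i)}

/-- `X^{⊕01}`: last bit of each member of `X` flipped. -/
def Xset01 (m t : ℕ) : Set (Fin (8 * m) → Bool) :=
  {v | ∃ i < t, v = flipAt (8 * m) (8 * m - 1) (xStr m (bin i))}

/-- `X^{⊕10}`: second-to-last bit of each member of `X` flipped. -/
def Xset10 (m t : ℕ) : Set (Fin (8 * m) → Bool) :=
  {v | ∃ i < t, v = flipAt (8 * m) (8 * m - 2) (xStr m (bin i))}

/-- `S = W \ (X ∪ X^{⊕01} ∪ X^{⊕10})`. -/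
def Sset (m t : ℕ) : Set (Fin (8 * m) → Bool) :=
  Wset m \ (Xset m t ∪ Xset01 m t ∪ Xset10 m t)

/-- complement map -/
def cmap (N : ℕ) (v : Fin N → Bool) : Fin N → Bool := fun i => !(v i)

/-- flip all positions divisible by m -/
def Pmap (m : ℕ) (v : Fin (8 * m) → Bool) : Fin (8 * m) → Bool := fun p =>
  if (p : ℕ) % m = 0 then !(v p) else v p

lemma Pmap_invol (m : ℕ) (v : Fin (8*m) → Bool) : Pmap m (Pmap m v) = v := by
  funext p; simp only [Pmap]; split_ifs <;> simp

lemma cmap_invol (N : ℕ) (v : Fin N → Bool) : cmap N (cmap N v) = v := by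
  funext p; simp [cmap]

lemma Pmap_cmap (m : ℕ) (v : Fin (8*m) → Bool) :
    Pmap m (cmap (8*m) v) = cmap (8*m) (Pmap m v) := by
  funext p; simp only [Pmap, cmap]; split_ifs <;> simp

lemma Pmap_flipAt (m q : ℕ) (v : Fin (8*m) → Bool) :
    Pmap m (flipAt (8*m) q v) = flipAt (8*m) q (Pmap m v) := by
  funext p; simp only [Pmap, flipAt]; split_ifs <;> simp

def pIdx (i : ℕ) : ℕ := 2 * (i / 2) + (1 - i % 2)

lemma pIdx_lt {i t : ℕ} (hi : i < t) (ht : Even t) : pIdx i < t := by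
  have h2 : t % 2 = 0 := Nat.even_iff.mp ht
  unfold pIdx; omega

lemma bin_pIdx (i o : ℕ) : bin (pIdx i) o = ((bin i o).xor (decide (o = 0))) := by
  cases o with
  | zero =>
    rcases Nat.mod_two_eq_zero_or_one i with h | h
    · have h1 : pIdx i % 2 = 1 := by unfold pIdx; omega
      simp [bin, Nat.testBit_zero, h, h1]
    · have h1 : pIdx i % 2 = 0 := by unfold pIdx; omega
      simp [bin, Nat.testBit_zero, h, h1]
  | succ n =>
    have h1 : pIdx i / 2 = i / 2 := by unfold pIdx; omega
    simp [bin, Nat.testBit_succ, h1]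

lemma Pmap_xStr (m i : ℕ) : Pmap m (xStr m (bin i)) = xStr m (bin (pIdx i)) := by
  funext p
  simp only [Pmap, xStr]
  rw [bin_pIdx]
  by_cases h1 : (p : ℕ) % m = 0 <;> by_cases h2 : ((p : ℕ) / m) % 2 = 0 <;>
    simp [h1, h2]

/-- the "swap adjacent blocks" involution on positions -/
def swapBlk (m : ℕ) (p : Fin (8 * m)) : Fin (8 * m) :=
  if h : ((p : ℕ) / m) % 2 = 0 then
    ⟨(p : ℕ) + m, by
      have hp := p.isLt
      have hm : 0 < m := by by_contra h'; omega
      have hdm := Nat.div_add_mod (p : ℕ) m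
      have hmod := Nat.mod_lt (p : ℕ) hm
      have h8 : (p : ℕ) / m < 8 := (Nat.div_lt_iff_lt_mul hm).mpr (by omega)
      have h6 : (p : ℕ) / m ≤ 6 := by
        generalize (p : ℕ) / m = x at h h8 ⊢; omega
      have hmul : m * ((p : ℕ) / m) ≤ m * 6 := Nat.mul_le_mul_left m h6
      omega⟩
  else
    ⟨(p : ℕ) - m, by have := p.isLt; omega⟩

lemma swapBlk_val (m : ℕ) (p : Fin (8*m)) :
    ((swapBlk m p : Fin (8*m)) : ℕ) =
      if ((p : ℕ) / m) % 2 = 0 then (p : ℕ) + m else (p : ℕ) - m := by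
  unfold swapBlk; split_ifs <;> rfl

lemma fin_m_pos (m : ℕ) (p : Fin (8*m)) : 0 < m := by
  have := p.isLt; by_contra h'; omega

lemma swapBlk_mod (m : ℕ) (p : Fin (8*m)) :
    ((swapBlk m p : Fin (8*m)) : ℕ) % m = (p : ℕ) % m := by
  have hm : 0 < m := fin_m_pos m p
  rw [swapBlk_val]
  by_cases h : ((p : ℕ) / m) % 2 = 0
  · rw [if_pos h]; simp [Nat.add_mod_right]
  · rw [if_neg h]
    have hq : 1 ≤ (p : ℕ) / m := by
      generalize (p : ℕ) / m = x at h ⊢; omega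
    have hpm : m ≤ (p : ℕ) := (Nat.one_le_div_iff hm).mp hq
    have he : ((p : ℕ) - m) + m = (p : ℕ) := by omega
    calc ((p : ℕ) - m) % m = (((p : ℕ) - m) + m) % m := (Nat.add_mod_right _ m).symm
    _ = (p : ℕ) % m := by rw [he]

lemma swapBlk_div (m : ℕ) (p : Fin (8*m)) :
    ¬ ((((swapBlk m p : Fin (8*m)) : ℕ) / m) % 2 = ((p : ℕ) / m) % 2) := by
  have hm : 0 < m := fin_m_pos m p
  rw [swapBlk_val]
  by_cases h : ((p : ℕ) / m) % 2 = 0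
  · rw [if_pos h]
    have hd : ((p : ℕ) + m) / m = (p : ℕ) / m + 1 := by
      rw [show (p : ℕ) + m = (p : ℕ) + 1 * m by ring, Nat.add_mul_div_right _ _ hm]
    rw [hd]
    generalize (p : ℕ) / m = x at h ⊢; omega
  · rw [if_neg h]
    have hq : 1 ≤ (p : ℕ) / m := by
      generalize (p : ℕ) / m = x at h ⊢; omega
    have hpm : m ≤ (p : ℕ) := (Nat.one_le_div_iff hm).mp hq
    have hdiv : ((p : ℕ) - m) / m = (p : ℕ) / m - 1 := by
      have h2 : ((p : ℕ) - m + 1 * m) / m = ((p : ℕ) - m) / m + 1 :=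
        Nat.add_mul_div_right _ _ hm
      rw [show (p : ℕ) - m + 1 * m = (p : ℕ) by omega] at h2
      omega
    rw [hdiv]
    generalize (p : ℕ) / m = x at h hq ⊢; omega

lemma xStr_swapBlk (m : ℕ) (z : ℕ → Bool) (p : Fin (8*m)) :
    xStr m z (swapBlk m p) = !(xStr m z p) := by
  unfold xStr
  rw [swapBlk_mod]
  have hd := swapBlk_div m p
  by_cases h : ((p : ℕ) / m) % 2 = 0
  · have h2 : ¬ ((((swapBlk m p : Fin (8*m)) : ℕ) / m) % 2 = 0) := fun hc =>
      hd (hc.trans h.symm)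
    simp [h, h2]
  · have h2 : (((swapBlk m p : Fin (8*m)) : ℕ) / m) % 2 = 0 := by
      generalize (((swapBlk m p : Fin (8*m)) : ℕ) / m) = a at hd ⊢
      generalize ((p : ℕ) / m) = b at hd h
      omega
    simp [h, h2]

lemma swapBlk_invol (m : ℕ) (p : Fin (8*m)) : swapBlk m (swapBlk m p) = p := by
  have hm : 0 < m := fin_m_pos m p
  have hd := swapBlk_div m p
  apply Fin.ext
  rw [swapBlk_val]
  by_cases h : ((p : ℕ) / m) % 2 = 0
  · have h2 : ¬ ((((swapBlk m p : Fin (8*m)) : ℕ) / m) % 2 = 0) := fun hc =>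
      hd (hc.trans h.symm)
    rw [if_neg h2, swapBlk_val, if_pos h]
    omega
  · have h2 : (((swapBlk m p : Fin (8*m)) : ℕ) / m) % 2 = 0 := by
      generalize (((swapBlk m p : Fin (8*m)) : ℕ) / m) = a at hd ⊢
      generalize ((p : ℕ) / m) = b at hd h
      omega
    have hq : 1 ≤ (p : ℕ) / m := by
      generalize (p : ℕ) / m = x at h ⊢; omega
    have hpm : m ≤ (p : ℕ) := (Nat.one_le_div_iff hm).mp hq
    rw [if_pos h2, swapBlk_val, if_neg h]
    omega

lemma dist_rt_xStr (m : ℕ) (z : ℕ → Bool) : hammingDist (rt m) (xStr m z) = 4 * m := by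
  classical
  have hcard : (Finset.univ.filter fun p : Fin (8*m) => rt m p ≠ xStr m z p).card +
      (Finset.univ.filter fun p : Fin (8*m) => ¬ (rt m p ≠ xStr m z p)).card = 8 * m := by
    rw [Finset.card_filter_add_card_filter_not]
    simp
  have hbij : (Finset.univ.filter fun p : Fin (8*m) => rt m p ≠ xStr m z p).card =
      (Finset.univ.filter fun p : Fin (8*m) => ¬ (rt m p ≠ xStr m z p)).card := by
    apply Finset.card_bij' (fun p _ => swapBlk m p) (fun p _ => swapBlk m p)
    · intro a ha
      simp only [Finset.mem_filter, Finset.mem_univ, true_and] at ha ⊢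
      simp only [rt] at ha ⊢
      rw [xStr_swapBlk]
      cases hx : xStr m z a <;> simp [hx] at ha ⊢
    · intro a ha
      simp only [Finset.mem_filter, Finset.mem_univ, true_and] at ha ⊢
      simp only [rt] at ha ⊢
      rw [xStr_swapBlk]
      cases hx : xStr m z a <;> simp [hx] at ha ⊢
    · intro a _; exact swapBlk_invol m a
    · intro a _; exact swapBlk_invol m a
  have : hammingDist (rt m) (xStr m z) =
      (Finset.univ.filter fun p : Fin (8*m) => rt m p ≠ xStr m z p).card := rfl
  omega

lemma dist_flip_le (N q : ℕ) (v : Fin N → Bool) : hammingDist v (flipAt N q v) ≤ 1 := by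
  classical
  have : hammingDist v (flipAt N q v) =
      (Finset.univ.filter fun i : Fin N => v i ≠ flipAt N q v i).card := rfl
  rw [this]
  apply Finset.card_le_one.mpr
  intro a ha b hb
  simp only [Finset.mem_filter, Finset.mem_univ, true_and, flipAt] at ha hb
  apply Fin.ext
  by_cases h1 : (a : ℕ) = q
  · by_cases h2 : (b : ℕ) = q
    · omega
    · simp [h2] at hb
  · simp [h1] at ha

lemma dist_rt_cmap (m : ℕ) (v : Fin (8*m) → Bool) :
    hammingDist (rt m) (cmap (8*m) v) = 8 * m - hammingDist (rt m) v := by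
  classical
  have hcard : (Finset.univ.filter fun p : Fin (8*m) => rt m p ≠ v p).card +
      (Finset.univ.filter fun p : Fin (8*m) => ¬ (rt m p ≠ v p)).card = 8 * m := by
    rw [Finset.card_filter_add_card_filter_not]
    simp
  have heq : (Finset.univ.filter fun p : Fin (8*m) => rt m p ≠ cmap (8*m) v p) =
      (Finset.univ.filter fun p : Fin (8*m) => ¬ (rt m p ≠ v p)) := by
    apply Finset.filter_congr
    intro p _
    simp only [rt, cmap]
    cases h : v p <;> simp [h]
  have h1 : hammingDist (rt m) (cmap (8*m) v) =
      (Finset.univ.filter fun p : Fin (8*m) => rt m p ≠ cmap (8*m) v p).card := rfl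
  have h2 : hammingDist (rt m) v =
      (Finset.univ.filter fun p : Fin (8*m) => rt m p ≠ v p).card := rfl
  rw [h1, heq]; omega

lemma two_le_dist {N : ℕ} (v w : Fin N → Bool) (p0 p1 : Fin N) (hne : p0 ≠ p1)
    (h0 : v p0 ≠ w p0) (h1 : v p1 ≠ w p1) : 2 ≤ hammingDist v w := by
  classical
  have hsub : ({p0, p1} : Finset (Fin N)) ⊆
      Finset.univ.filter fun i : Fin N => v i ≠ w i := by
    intro a ha
    simp only [Finset.mem_insert, Finset.mem_singleton] at ha
    rcases ha with rfl | rfl <;> simp [h0, h1]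
  have := Finset.card_le_card hsub
  rwa [Finset.card_pair hne] at this

def Rset (m t : ℕ) : Set (Fin (8 * m) → Bool) := Xset m t ∪ Xset01 m t ∪ Xset10 m t

lemma R_closed_P {m t : ℕ} (hte : Even t) {v : Fin (8*m) → Bool}
    (hv : v ∈ Rset m t) : Pmap m v ∈ Rset m t := by
  rcases hv with (⟨i, hi, rfl⟩ | ⟨i, hi, rfl⟩) | ⟨i, hi, rfl⟩
  · exact Or.inl (Or.inl ⟨pIdx i, pIdx_lt hi hte, Pmap_xStr m i⟩)
  · exact Or.inl (Or.inr ⟨pIdx i, pIdx_lt hi hte, by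
      rw [Pmap_flipAt, Pmap_xStr]⟩)
  · exact Or.inr ⟨pIdx i, pIdx_lt hi hte, by rw [Pmap_flipAt, Pmap_xStr]⟩

lemma dist_R {m t : ℕ} {v : Fin (8*m) → Bool} (hv : v ∈ Rset m t) :
    4 * m - 1 ≤ hammingDist (rt m) v ∧ hammingDist (rt m) v ≤ 4 * m + 1 := by
  have tri : ∀ q (i : ℕ),
      4 * m - 1 ≤ hammingDist (rt m) (flipAt (8*m) q (xStr m (bin i))) ∧
      hammingDist (rt m) (flipAt (8*m) q (xStr m (bin i))) ≤ 4 * m + 1 := by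
    intro q i
    have h1 := dist_rt_xStr m (bin i)
    have h2 := dist_flip_le (8*m) q (xStr m (bin i))
    have t1 := hammingDist_triangle (rt m) (xStr m (bin i)) (flipAt (8*m) q (xStr m (bin i)))
    have t2 := hammingDist_triangle (rt m) (flipAt (8*m) q (xStr m (bin i))) (xStr m (bin i))
    rw [hammingDist_comm (flipAt (8*m) q (xStr m (bin i)))] at t2
    omega
  rcases hv with (⟨i, hi, rfl⟩ | ⟨i, hi, rfl⟩) | ⟨i, hi, rfl⟩
  · have h1 := dist_rt_xStr m (bin i); omega
  · exact tri _ i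
  · exact tri _ i

open scoped Classical in
noncomputable def Fm (m t : ℕ) (v : Fin (8*m) → Bool) : Fin (8*m) → Bool :=
  if cmap (8*m) v ∈ Rset m t then Pmap m v else cmap (8*m) v

lemma dist_le_8m {m : ℕ} (x y : Fin (8*m) → Bool) : hammingDist x y ≤ 8 * m := by
  have := hammingDist_le_card_fintype (x := x) (y := y)
  simpa using this

lemma Fm_mem {m t : ℕ} (hm : 2 ≤ m) (hte : Even t) {v : Fin (8*m) → Bool}
    (hv : v ∈ Sset m t) : Fm m t v ∈ Sset m t := by
  obtain ⟨hW, hR⟩ := hv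
  have hR' : v ∉ Rset m t := hR
  by_cases hc : cmap (8*m) v ∈ Rset m t
  · rw [Fm, if_pos hc]
    constructor
    · have hcP : cmap (8*m) (Pmap m v) ∈ Rset m t := by
        rw [← Pmap_cmap]; exact R_closed_P hte hc
      have hb := dist_R hcP
      have he := dist_rt_cmap m (Pmap m v)
      have hle := dist_le_8m (rt m) (Pmap m v)
      exact ⟨by omega, by omega⟩
    · intro hPR
      have := R_closed_P hte hPR
      rw [Pmap_invol] at this
      exact hR' this
  · rw [Fm, if_neg hc]
    constructor
    · have he := dist_rt_cmap m v
      obtain ⟨h1, h2⟩ := hW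
      exact ⟨by omega, by omega⟩
    · exact hc

lemma Fm_invol {m t : ℕ} (hte : Even t) {v : Fin (8*m) → Bool}
    (hv : v ∈ Sset m t) : Fm m t (Fm m t v) = v := by
  obtain ⟨hW, hR⟩ := hv
  have hR' : v ∉ Rset m t := hR
  by_cases hc : cmap (8*m) v ∈ Rset m t
  · have hcP : cmap (8*m) (Pmap m v) ∈ Rset m t := by
      rw [← Pmap_cmap]; exact R_closed_P hte hc
    have h1 : Fm m t v = Pmap m v := by rw [Fm, if_pos hc]
    rw [h1, Fm, if_pos hcP, Pmap_invol]
  · have hcc : ¬ (cmap (8*m) (cmap (8*m) v) ∈ Rset m t) := by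
      rw [cmap_invol]; exact hR'
    have h1 : Fm m t v = cmap (8*m) v := by rw [Fm, if_neg hc]
    rw [h1, Fm, if_neg hcc, cmap_invol]

lemma Fm_dist {m t : ℕ} (hm : 2 ≤ m) (v : Fin (8*m) → Bool) :
    2 ≤ hammingDist v (Fm m t v) := by
  have h0 : (0 : ℕ) < 8 * m := by omega
  have h1 : m < 8 * m := by omega
  have hne : (⟨0, h0⟩ : Fin (8*m)) ≠ ⟨m, h1⟩ := by
    intro h
    have := congrArg Fin.val h
    simp at this
    omega
  by_cases hc : cmap (8*m) v ∈ Rset m t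
  · rw [Fm, if_pos hc]
    apply two_le_dist v _ ⟨0, h0⟩ ⟨m, h1⟩ hne
    · show v _ ≠ Pmap m v _
      simp [Pmap, Nat.zero_mod]
    · show v _ ≠ Pmap m v _
      simp [Pmap, Nat.mod_self]
  · rw [Fm, if_neg hc]
    apply two_le_dist v _ ⟨0, h0⟩ ⟨m, h1⟩ hne
    · simp [cmap]
    · simp [cmap]


/-- For `m ≥ 2` and even `0 < t ≤ 2^m`, the set
`S = W \ (X ∪ X^{⊕01} ∪ X^{⊕10})` admits a fixed-point-free involution `σ` with
`hammingDist s (σ s) ≥ 2` for all `s ∈ S`; i.e. a perfect matching of `S` in which no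
matched pair is adjacent in the hypercube `Q_{8m}`. -/
theorem stmt16 (m : ℕ) (hm : 2 ≤ m) (t : ℕ) (ht0 : 0 < t) (ht : t ≤ 2 ^ m)
    (hte : Even t) :
    ∃ σ : (Sset m t) → (Sset m t), Function.Involutive σ ∧
      ∀ s : Sset m t, σ s ≠ s ∧
        2 ≤ hammingDist ((s : Fin (8 * m) → Bool)) ((σ s : Fin (8 * m) → Bool)) := by
  refine ⟨fun s => ⟨Fm m t s.1, Fm_mem hm hte s.2⟩, ?_, ?_⟩
  · intro x
    exact Subtype.ext (Fm_invol hte x.2)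
  · intro s
    have hd := Fm_dist (t := t) hm s.1
    refine ⟨?_, hd⟩
    intro h
    have hv : Fm m t s.1 = s.1 := congrArg Subtype.val h
    rw [hv, hammingDist_self] at hd
    omega
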